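/- Let π* = (u*⊗v*)·K ∈ Π(μ,ν) with u* ∈ L^∞₊(X,μ), v* ∈ L^∞₊(Y,ν) (so that π* is the unique minimizer of KL(·|K) over Π(μ,ν)). Let {X_i}_{i∈I} be a finite measurable partition of X, K_i := K restricted to X_i×Y, and let π := Σ_{i∈I} (u_i⊗v_i)·K_i ∈ Π(μ,ν) with u_i ∈ L^∞₊(X,μ), v_i ∈ L^∞₊(Y,ν). Then KL(π|K) − KL(π*|K) = KL(π|π*). -/

import Mathlib

open MeasureTheory ENNReal Filter Topology

noncomputable section

/-- `phi s = s * log s - s + 1` (note `phi 0 = 1` since `Real.log 0 = 0`);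
this is the integrand of the Kullback--Leibler divergence. -/
def phi (s : ℝ) : ℝ := s * Real.log s - s + 1

open Classical in
/-- Kullback--Leibler divergence `KL(ρ|σ) ∈ [0,∞]`: `∫ phi (dρ/dσ) dσ` if `ρ ≪ σ`,
and `∞` otherwise (nonnegativity of `ρ` is automatic for measures). -/
def KL {Z : Type*} [MeasurableSpace Z] (ρ σ : Measure Z) : ℝ≥0∞ :=
  if ρ ≪ σ then ∫⁻ z, ENNReal.ofReal (phi ((ρ.rnDeriv σ) z).toReal) ∂σ else ⊤

/-- The set `Π(μh, νh)` of transport plans with marginals `μh` and `νh`. -/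
def Coupling {X Y : Type*} [MeasurableSpace X] [MeasurableSpace Y]
    (μh : Measure X) (νh : Measure Y) : Set (Measure (X × Y)) :=
  {π | π.map Prod.fst = μh ∧ π.map Prod.snd = νh}

/-- The Gibbs kernel measure `K = exp(-c/ε) ⋅ (μ ⊗ ν)`. -/
def Kmeas {X Y : Type*} [MeasurableSpace X] [MeasurableSpace Y]
    (μ : Measure X) (ν : Measure Y) [SFinite ν] (c : X × Y → ℝ) (ε : ℝ) : Measure (X × Y) :=
  (μ.prod ν).withDensity fun p => ENNReal.ofReal (Real.exp (-c p / ε))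

/-- The product density `(u ⊗ v)(x,y) = u x * v y`, as an `ℝ≥0∞`-valued density. -/
def prodDensity {X Y : Type*} (u : X → ℝ) (v : Y → ℝ) : X × Y → ℝ≥0∞ :=
  fun p => ENNReal.ofReal (u p.1 * v p.2)

/-- `L^∞₊(μ)`: measurable, a.e. nonnegative, essentially bounded functions. -/
def LinftyPlus {Z : Type*} [MeasurableSpace Z] (μ : Measure Z) (u : Z → ℝ) : Prop :=
  Measurable u ∧ (∀ᵐ z ∂μ, 0 ≤ u z) ∧ ∃ C : ℝ, ∀ᵐ z ∂μ, u z ≤ C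

/- ### Auxiliary lemmas -/

lemma sub_one_le_mul_log {s : ℝ} (hs : 0 ≤ s) : s - 1 ≤ s * Real.log s := by
  rcases eq_or_lt_of_le hs with h | h
  · simp [← h]
  · have h1 := Real.one_sub_inv_le_log_of_pos h
    have h2 : s * (1 - s⁻¹) ≤ s * Real.log s := mul_le_mul_of_nonneg_left h1 hs
    have h3 : s * (1 - s⁻¹) = s - 1 := by field_simp
    linarith

lemma mul_log_le_mul_sub_one {s : ℝ} (hs : 0 ≤ s) : s * Real.log s ≤ s * (s - 1) := by
  rcases eq_or_lt_of_le hs with h | h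
  · simp [← h]
  · exact mul_le_mul_of_nonneg_left (Real.log_le_sub_one_of_pos h) hs

lemma phi_nonneg {s : ℝ} (hs : 0 ≤ s) : 0 ≤ phi s := by
  have := sub_one_le_mul_log hs; unfold phi; linarith

lemma phi_le_sq {s : ℝ} (hs : 0 ≤ s) : phi s ≤ (s - 1) ^ 2 := by
  have := mul_log_le_mul_sub_one hs; unfold phi; nlinarith

lemma ae_fst_prod {X Y : Type*} [MeasurableSpace X] [MeasurableSpace Y]
    {μ : Measure X} (ν : Measure Y) [SFinite μ] [SFinite ν] {P : X → Prop}
    (h : ∀ᵐ x ∂μ, P x) : ∀ᵐ p ∂μ.prod ν, P p.1 := by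
  rw [ae_iff] at h ⊢
  refine measure_mono_null (t := {x | ¬ P x} ×ˢ (Set.univ : Set Y))
    (fun p hp => Set.mk_mem_prod hp trivial) ?_
  rw [Measure.prod_prod]
  simp [h]

lemma ae_snd_prod {X Y : Type*} [MeasurableSpace X] [MeasurableSpace Y]
    (μ : Measure X) {ν : Measure Y} [SFinite μ] [SFinite ν] {P : Y → Prop}
    (h : ∀ᵐ y ∂ν, P y) : ∀ᵐ p ∂μ.prod ν, P p.2 := by
  rw [ae_iff] at h ⊢
  refine measure_mono_null (t := (Set.univ : Set X) ×ˢ {y | ¬ P y})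
    (fun p hp => Set.mk_mem_prod trivial hp) ?_
  rw [Measure.prod_prod]
  simp [h]

/-- Integral against a `withDensity` with everywhere-finite density. -/
lemma integral_withDensity_toReal {Z : Type*} [MeasurableSpace Z] (ρ : Measure Z)
    {d : Z → ℝ≥0∞} (hd : Measurable d) (hdtop : ∀ p, d p ≠ ∞) (F : Z → ℝ) :
    ∫ p, F p ∂(ρ.withDensity d) = ∫ p, (d p).toReal * F p ∂ρ := by
  have h1 : ρ.withDensity d = ρ.withDensity (fun p => ((d p).toNNReal : ℝ≥0∞)) := by
    congr 1
    funext p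
    rw [ENNReal.coe_toNNReal (hdtop p)]
  rw [h1, integral_withDensity_eq_integral_smul hd.ennreal_toNNReal]
  simp [NNReal.smul_def, ENNReal.toReal]

/-- Lemma 3.4, second part: for a feasible plan `π` built from
scaled kernels over a partition, the suboptimality equals a `KL` divergence:
`KL(π|K) − KL(π*|K) = KL(π|π*)`, stated additively as
`KL(π|K) = KL(π|π*) + KL(π*|K)`. -/
theorem suboptimality_eq_kl
    {X Y : Type*} [MetricSpace X] [CompactSpace X] [MeasurableSpace X] [BorelSpace X]
    [MetricSpace Y] [CompactSpace Y] [MeasurableSpace Y] [BorelSpace Y]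
    (μ : Measure X) (ν : Measure Y) [IsProbabilityMeasure μ] [IsProbabilityMeasure ν]
    (c : X × Y → ℝ) (hc : Measurable c) (cmax : ℝ)
    (hc0 : ∀ p, 0 ≤ c p) (hcmax : ∀ p, c p ≤ cmax)
    (ε : ℝ) (hε : 0 < ε)
    (us : X → ℝ) (vs : Y → ℝ) (hus : LinftyPlus μ us) (hvs : LinftyPlus ν vs)
    (πopt : Measure (X × Y))
    (hπoptdef : πopt = (Kmeas μ ν c ε).withDensity (prodDensity us vs))
    (hπopt : πopt ∈ Coupling μ ν)
    {ι : Type*} [Fintype ι]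
    (Xc : ι → Set X) (hXm : ∀ i, MeasurableSet (Xc i))
    (hXd : ∀ i j, i ≠ j → Disjoint (Xc i) (Xc j)) (hXu : (⋃ i, Xc i) = Set.univ)
    (u : ι → X → ℝ) (v : ι → Y → ℝ)
    (hu : ∀ i, LinftyPlus μ (u i)) (hv : ∀ i, LinftyPlus ν (v i))
    (π : Measure (X × Y))
    (hπ : π = ∑ i,
      ((Kmeas μ ν c ε).restrict (Xc i ×ˢ Set.univ)).withDensity (prodDensity (u i) (v i)))
    (hπfeas : π ∈ Coupling μ ν) :
    KL π (Kmeas μ ν c ε) = KL π πopt + KL πopt (Kmeas μ ν c ε) := by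
  classical
  obtain ⟨husm, hus0, Cu, husC⟩ := hus
  obtain ⟨hvsm, hvs0, Cv, hvsC⟩ := hvs
  set K := Kmeas μ ν c ε with hKdef
  set k : X × Y → ℝ≥0∞ := fun p => ENNReal.ofReal (Real.exp (-c p / ε)) with hkdef
  have hkm : Measurable k :=
    ENNReal.measurable_ofReal.comp (Real.measurable_exp.comp (hc.neg.div_const ε))
  have hk1 : ∀ p, k p ≤ 1 := by
    intro p
    rw [hkdef]
    simp only []
    rw [show (1 : ℝ≥0∞) = ENNReal.ofReal 1 by simp]
    apply ENNReal.ofReal_le_ofReal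
    rw [Real.exp_le_one_iff]
    apply div_nonpos_of_nonpos_of_nonneg (by linarith [hc0 p]) hε.le
  have hk0 : ∀ p, k p ≠ 0 := by
    intro p
    simp [hkdef, ENNReal.ofReal_eq_zero, not_le, Real.exp_pos]
  have hKwd : K = (μ.prod ν).withDensity k := rfl
  have hKle : K ≤ μ.prod ν := by
    refine Measure.le_intro fun s hs _ => ?_
    rw [hKwd, withDensity_apply _ hs]
    calc ∫⁻ p in s, k p ∂(μ.prod ν) ≤ ∫⁻ _ in s, 1 ∂(μ.prod ν) :=
          lintegral_mono fun p => hk1 p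
      _ = (μ.prod ν) s := by simp
  haveI hKfin : IsFiniteMeasure K :=
    ⟨lt_of_le_of_lt (Measure.le_iff'.mp hKle Set.univ) (measure_lt_top _ _)⟩
  have hK_ac : K ≪ μ.prod ν := hKwd ▸ withDensity_absolutelyContinuous _ _
  have hprod_ac : μ.prod ν ≪ K := by
    rw [hKwd]
    exact withDensity_absolutelyContinuous' hkm.aemeasurable (Eventually.of_forall hk0)
  -- probability instances
  have hπuniv : π Set.univ = 1 := by
    have h1 := congrArg (fun m : Measure X => m Set.univ) hπfeas.1
    simpa [Measure.map_apply measurable_fst MeasurableSet.univ] using h1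
  haveI : IsProbabilityMeasure π := ⟨hπuniv⟩
  have hπoptuniv : πopt Set.univ = 1 := by
    have h1 := congrArg (fun m : Measure X => m Set.univ) hπopt.1
    simpa [Measure.map_apply measurable_fst MeasurableSet.univ] using h1
  haveI : IsProbabilityMeasure πopt := ⟨hπoptuniv⟩
  -- densities
  set fE : X × Y → ℝ≥0∞ := prodDensity us vs with hfEdef
  have hfEm : Measurable fE :=
    ((husm.comp measurable_fst).mul (hvsm.comp measurable_snd)).ennreal_ofReal
  have hfEtop : ∀ p, fE p ≠ ∞ := fun p => ENNReal.ofReal_ne_top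
  set g₁ : ι → X × Y → ℝ≥0∞ :=
    fun i => (Xc i ×ˢ (Set.univ : Set Y)).indicator (prodDensity (u i) (v i)) with hg₁def
  set gE : X × Y → ℝ≥0∞ := fun p => ∑ i, g₁ i p with hgEdef
  have hg₁m : ∀ i, Measurable (g₁ i) := fun i =>
    ((((hu i).1.comp measurable_fst).mul ((hv i).1.comp measurable_snd)).ennreal_ofReal).indicator
      ((hXm i).prod MeasurableSet.univ)
  have hgEm : Measurable gE := Finset.measurable_sum _ fun i _ => hg₁m i
  have hg₁top : ∀ i p, g₁ i p ≠ ∞ := by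
    intro i p
    rw [hg₁def]
    by_cases h : p ∈ Xc i ×ˢ (Set.univ : Set Y)
    · simp [h, prodDensity]
    · simp [h]
  have hgEtop : ∀ p, gE p ≠ ∞ := by
    intro p
    rw [hgEdef]
    exact ENNReal.sum_ne_top.mpr fun i _ => hg₁top i p
  have hπg : π = K.withDensity gE := by
    rw [hπ]
    have h1 : ∀ i : ι, (K.restrict (Xc i ×ˢ Set.univ)).withDensity (prodDensity (u i) (v i)) =
        K.withDensity (g₁ i) := fun i =>
      (withDensity_indicator ((hXm i).prod MeasurableSet.univ) _).symm
    simp_rw [h1]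
    -- sum of withDensity over a finset
    have h2 : ∀ s : Finset ι, ∑ i ∈ s, K.withDensity (g₁ i) =
        K.withDensity (fun p => ∑ i ∈ s, g₁ i p) := by
      intro s
      induction s using Finset.induction_on with
      | empty => simp
      | insert j s' hni ih =>
          rw [Finset.sum_insert hni, ih]
          rw [← withDensity_add_left (hg₁m j)]
          congr 1
          funext p
          simp [Finset.sum_insert hni]
    rw [h2 Finset.univ]
  -- real densities
  set a : X × Y → ℝ := fun p => (gE p).toReal with hadef
  set b : X × Y → ℝ := fun p => us p.1 * vs p.2 with hbdef
  have ham : Measurable a := hgEm.ennreal_toReal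
  have hbm : Measurable b := (husm.comp measurable_fst).mul (hvsm.comp measurable_snd)
  have ha0 : ∀ p, 0 ≤ a p := fun p => ENNReal.toReal_nonneg
  have hofa : ∀ p, ENNReal.ofReal (a p) = gE p := fun p => ENNReal.ofReal_toReal (hgEtop p)
  have hofb : ∀ p, fE p = ENNReal.ofReal (b p) := fun p => rfl
  -- positivity of us, vs
  have hus_pos : ∀ᵐ x ∂μ, 0 < us x := by
    have hNm : MeasurableSet {x | us x = 0} := husm (measurableSet_singleton 0)
    have hN : μ {x | us x = 0} = 0 := by
      have h1 : μ {x | us x = 0} = πopt ({x | us x = 0} ×ˢ (Set.univ : Set Y)) := by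
        conv_lhs => rw [← hπopt.1]
        rw [Measure.map_apply measurable_fst hNm]
        congr 1
        ext p
        simp
      have hz : ∀ p ∈ {x | us x = 0} ×ˢ (Set.univ : Set Y), fE p = (fun _ => (0 : ℝ≥0∞)) p := by
        intro p hp
        have : us p.1 = 0 := hp.1
        simp [hfEdef, prodDensity, this]
      rw [h1, hπoptdef, withDensity_apply _ (hNm.prod MeasurableSet.univ),
        setLIntegral_congr_fun (hNm.prod MeasurableSet.univ) hz]
      simp
    have h2 : ∀ᵐ x ∂μ, us x ≠ 0 := by
      rw [ae_iff]
      simpa using hN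
    filter_upwards [hus0, h2] with x h1 h2
    exact lt_of_le_of_ne h1 (Ne.symm h2)
  have hvs_pos : ∀ᵐ y ∂ν, 0 < vs y := by
    have hNm : MeasurableSet {y | vs y = 0} := hvsm (measurableSet_singleton 0)
    have hN : ν {y | vs y = 0} = 0 := by
      have h1 : ν {y | vs y = 0} = πopt ((Set.univ : Set X) ×ˢ {y | vs y = 0}) := by
        conv_lhs => rw [← hπopt.2]
        rw [Measure.map_apply measurable_snd hNm]
        congr 1
        ext p
        simp
      have hz : ∀ p ∈ (Set.univ : Set X) ×ˢ {y | vs y = 0}, fE p = (fun _ => (0 : ℝ≥0∞)) p := by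
        intro p hp
        have : vs p.2 = 0 := hp.2
        simp [hfEdef, prodDensity, this]
      rw [h1, hπoptdef, withDensity_apply _ (MeasurableSet.univ.prod hNm),
        setLIntegral_congr_fun (MeasurableSet.univ.prod hNm) hz]
      simp
    have h2 : ∀ᵐ y ∂ν, vs y ≠ 0 := by
      rw [ae_iff]
      simpa using hN
    filter_upwards [hvs0, h2] with y h1 h2
    exact lt_of_le_of_ne h1 (Ne.symm h2)
  -- a.e. facts on the product / K
  have huspK : ∀ᵐ p ∂K, 0 < us p.1 := (ae_fst_prod ν hus_pos).filter_mono hK_ac.ae_le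
  have hvspK : ∀ᵐ p ∂K, 0 < vs p.2 := (ae_snd_prod μ hvs_pos).filter_mono hK_ac.ae_le
  have husCK : ∀ᵐ p ∂K, us p.1 ≤ Cu := (ae_fst_prod ν husC).filter_mono hK_ac.ae_le
  have hvsCK : ∀ᵐ p ∂K, vs p.2 ≤ Cv := (ae_snd_prod μ hvsC).filter_mono hK_ac.ae_le
  have hbposK : ∀ᵐ p ∂K, 0 < b p := by
    filter_upwards [huspK, hvspK] with p h1 h2
    exact mul_pos h1 h2
  set B : ℝ := max Cu 0 * max Cv 0 with hBdef
  have hbBK : ∀ᵐ p ∂K, b p ≤ B := by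
    filter_upwards [huspK, hvspK, husCK, hvsCK] with p h1 h2 h3 h4
    have : us p.1 ≤ max Cu 0 := le_trans h3 (le_max_left _ _)
    have : vs p.2 ≤ max Cv 0 := le_trans h4 (le_max_left _ _)
    rw [hbdef]
    apply mul_le_mul ‹us p.1 ≤ max Cu 0› ‹vs p.2 ≤ max Cv 0› h2.le (le_max_right _ _)
  -- bound for a
  choose Cui hCui using fun i => (hu i).2.2
  choose Cvi hCvi using fun i => (hv i).2.2
  set A : ℝ := ∑ i, max (Cui i) 0 * max (Cvi i) 0 with hAdef
  have haAK : ∀ᵐ p ∂K, a p ≤ A := by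
    have h1 : ∀ᵐ p ∂K, ∀ i, 0 ≤ u i p.1 ∧ u i p.1 ≤ Cui i ∧ 0 ≤ v i p.2 ∧ v i p.2 ≤ Cvi i := by
      rw [ae_all_iff]
      intro i
      have := (ae_fst_prod ν ((hu i).2.1)).and ((ae_fst_prod ν (hCui i)).and
        ((ae_snd_prod μ ((hv i).2.1)).and (ae_snd_prod μ (hCvi i))))
      have := this.filter_mono hK_ac.ae_le
      filter_upwards [this] with p hp
      exact ⟨hp.1, hp.2.1, hp.2.2.1, hp.2.2.2⟩
    filter_upwards [h1] with p hp
    rw [hadef]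
    simp only []
    rw [hgEdef]
    simp only []
    rw [ENNReal.toReal_sum (fun i _ => hg₁top i p), hAdef]
    apply Finset.sum_le_sum
    intro i _
    obtain ⟨e1, e2, e3, e4⟩ := hp i
    have hb1 : u i p.1 ≤ max (Cui i) 0 := le_trans e2 (le_max_left _ _)
    have hb2 : v i p.2 ≤ max (Cvi i) 0 := le_trans e4 (le_max_left _ _)
    rw [hg₁def]
    by_cases h : p ∈ Xc i ×ˢ (Set.univ : Set Y)
    · simp only [Set.indicator_of_mem h, prodDensity, ENNReal.toReal_ofReal (mul_nonneg e1 e3)]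
      exact mul_le_mul hb1 hb2 e3 (le_max_right _ _)
    · simp only [Set.indicator_of_notMem h, ENNReal.toReal_zero]
      positivity
  have hA0 : 0 ≤ A := by
    rw [hAdef]
    apply Finset.sum_nonneg
    intro i _
    positivity
  have hB0 : 0 ≤ B := by rw [hBdef]; positivity
  -- integrability of phi ∘ a and phi ∘ b
  have hphim : Measurable phi :=
    ((measurable_id.mul Real.measurable_log).sub measurable_id).add measurable_const
  have hphia_int : Integrable (fun p => phi (a p)) K := by
    refine ⟨(hphim.comp ham).aestronglyMeasurable, ?_⟩
    apply HasFiniteIntegral.of_bounded (C := (A + 1) ^ 2)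
    filter_upwards [haAK] with p hp
    rw [Real.norm_eq_abs, abs_of_nonneg (phi_nonneg (ha0 p))]
    have h1 := phi_le_sq (ha0 p)
    have h2 := ha0 p
    nlinarith
  have hphib_int : Integrable (fun p => phi (b p)) K := by
    refine ⟨(hphim.comp hbm).aestronglyMeasurable, ?_⟩
    apply HasFiniteIntegral.of_bounded (C := (B + 1) ^ 2)
    filter_upwards [hbBK, hbposK] with p hp hp0
    rw [Real.norm_eq_abs, abs_of_nonneg (phi_nonneg hp0.le)]
    have h1 := phi_le_sq hp0.le
    nlinarith
  -- log functions
  set Lu : X → ℝ := fun x => Real.log (us x) with hLudef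
  set Lv : Y → ℝ := fun y => Real.log (vs y) with hLvdef
  have hLum : Measurable Lu := Real.measurable_log.comp husm
  have hLvm : Measurable Lv := Real.measurable_log.comp hvsm
  -- b * Lu∘fst and b * Lv∘snd are bounded a.e., hence integrable w.r.t. K
  have hbLu_int : Integrable (fun p => b p * Lu p.1) K := by
    refine ⟨(hbm.mul (hLum.comp measurable_fst)).aestronglyMeasurable, ?_⟩
    apply HasFiniteIntegral.of_bounded
      (C := max Cv 0 * max 1 (max Cu 0 * (max Cu 0 + 1)))
    filter_upwards [huspK, hvspK, husCK, hvsCK] with p h1 h2 h3 h4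
    have e0 : us p.1 ≤ max Cu 0 := le_trans h3 (le_max_left _ _)
    have e0' : vs p.2 ≤ max Cv 0 := le_trans h4 (le_max_left _ _)
    have e1 : -1 ≤ us p.1 * Real.log (us p.1) := by
      have := sub_one_le_mul_log h1.le; linarith
    have e2 : us p.1 * Real.log (us p.1) ≤ max Cu 0 * (max Cu 0 + 1) := by
      have := mul_log_le_mul_sub_one h1.le
      nlinarith
    have e3 : |us p.1 * Real.log (us p.1)| ≤ max 1 (max Cu 0 * (max Cu 0 + 1)) := by
      rw [abs_le]
      constructor
      · have : (1 : ℝ) ≤ max 1 (max Cu 0 * (max Cu 0 + 1)) := le_max_left _ _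
        linarith
      · exact le_trans e2 (le_max_right _ _)
    have heq : b p * Lu p.1 = vs p.2 * (us p.1 * Real.log (us p.1)) := by
      rw [hbdef, hLudef]; ring
    rw [Real.norm_eq_abs, heq, abs_mul, abs_of_nonneg h2.le]
    apply mul_le_mul e0' e3 (abs_nonneg _) (le_max_right _ _)
  have hbLv_int : Integrable (fun p => b p * Lv p.2) K := by
    refine ⟨(hbm.mul (hLvm.comp measurable_snd)).aestronglyMeasurable, ?_⟩
    apply HasFiniteIntegral.of_bounded
      (C := max Cu 0 * max 1 (max Cv 0 * (max Cv 0 + 1)))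
    filter_upwards [huspK, hvspK, husCK, hvsCK] with p h1 h2 h3 h4
    have e0 : us p.1 ≤ max Cu 0 := le_trans h3 (le_max_left _ _)
    have e0' : vs p.2 ≤ max Cv 0 := le_trans h4 (le_max_left _ _)
    have e1 : -1 ≤ vs p.2 * Real.log (vs p.2) := by
      have := sub_one_le_mul_log h2.le; linarith
    have e2 : vs p.2 * Real.log (vs p.2) ≤ max Cv 0 * (max Cv 0 + 1) := by
      have := mul_log_le_mul_sub_one h2.le
      nlinarith
    have e3 : |vs p.2 * Real.log (vs p.2)| ≤ max 1 (max Cv 0 * (max Cv 0 + 1)) := by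
      rw [abs_le]
      constructor
      · have : (1 : ℝ) ≤ max 1 (max Cv 0 * (max Cv 0 + 1)) := le_max_left _ _
        linarith
      · exact le_trans e2 (le_max_right _ _)
    have heq : b p * Lv p.2 = us p.1 * (vs p.2 * Real.log (vs p.2)) := by
      rw [hbdef, hLvdef]; ring
    rw [Real.norm_eq_abs, heq, abs_mul, abs_of_nonneg h1.le]
    apply mul_le_mul e0 e3 (abs_nonneg _) (le_max_right _ _)
  -- transfer to integrability of Lu over μ and Lv over ν
  have hfEtoReal : ∀ᵐ p ∂K, (fE p).toReal = b p := by
    filter_upwards [hbposK] with p hp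
    rw [hofb p, ENNReal.toReal_ofReal hp.le]
  have hLu_int_opt : Integrable (fun p => Lu p.1) πopt := by
    rw [hπoptdef]
    rw [integrable_withDensity_iff hfEm (Eventually.of_forall fun p => (hfEtop p).lt_top)]
    apply hbLu_int.congr
    filter_upwards [hfEtoReal] with p hp
    rw [hp]; ring
  have hLv_int_opt : Integrable (fun p => Lv p.2) πopt := by
    rw [hπoptdef]
    rw [integrable_withDensity_iff hfEm (Eventually.of_forall fun p => (hfEtop p).lt_top)]
    apply hbLv_int.congr
    filter_upwards [hfEtoReal] with p hp
    rw [hp]; ring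
  have hLu_int_μ : Integrable Lu μ := by
    rw [← hπopt.1]
    exact (integrable_map_measure hLum.aestronglyMeasurable measurable_fst.aemeasurable).mpr
      hLu_int_opt
  have hLv_int_ν : Integrable Lv ν := by
    rw [← hπopt.2]
    exact (integrable_map_measure hLvm.aestronglyMeasurable measurable_snd.aemeasurable).mpr
      hLv_int_opt
  have hLu_int_prod : Integrable (fun p => Lu p.1) (μ.prod ν) := by
    have h1 : Integrable Lu ((μ.prod ν).map Prod.fst) := by
      rw [Measure.map_fst_prod]
      simpa using hLu_int_μ
    exact (integrable_map_measure hLum.aestronglyMeasurable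
      measurable_fst.aemeasurable).mp h1
  have hLv_int_prod : Integrable (fun p => Lv p.2) (μ.prod ν) := by
    have h1 : Integrable Lv ((μ.prod ν).map Prod.snd) := by
      rw [Measure.map_snd_prod]
      simpa using hLv_int_ν
    exact (integrable_map_measure hLvm.aestronglyMeasurable
      measurable_snd.aemeasurable).mp h1
  have hLu_int_K : Integrable (fun p => Lu p.1) K := hLu_int_prod.mono_measure hKle
  have hLv_int_K : Integrable (fun p => Lv p.2) K := hLv_int_prod.mono_measure hKle
  have haLu_int : Integrable (fun p => a p * Lu p.1) K := by
    refine Integrable.mono' (hLu_int_K.abs.const_mul A)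
      ((ham.mul (hLum.comp measurable_fst)).aestronglyMeasurable) ?_
    filter_upwards [haAK] with p hp
    rw [Real.norm_eq_abs, abs_mul, abs_of_nonneg (ha0 p)]
    exact mul_le_mul_of_nonneg_right hp (abs_nonneg _)
  have haLv_int : Integrable (fun p => a p * Lv p.2) K := by
    refine Integrable.mono' (hLv_int_K.abs.const_mul A)
      ((ham.mul (hLvm.comp measurable_snd)).aestronglyMeasurable) ?_
    filter_upwards [haAK] with p hp
    rw [Real.norm_eq_abs, abs_mul, abs_of_nonneg (ha0 p)]
    exact mul_le_mul_of_nonneg_right hp (abs_nonneg _)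
  -- integral identities via the marginal conditions
  have hmapπ : ∀ (ρ : Measure (X × Y)), ρ.map Prod.fst = μ → ∀ (F : X → ℝ), Measurable F →
      ∫ p, F p.1 ∂ρ = ∫ x, F x ∂μ := by
    intro ρ hρ F hF
    rw [← hρ, integral_map measurable_fst.aemeasurable hF.aestronglyMeasurable]
  have hmapπ' : ∀ (ρ : Measure (X × Y)), ρ.map Prod.snd = ν → ∀ (F : Y → ℝ), Measurable F →
      ∫ p, F p.2 ∂ρ = ∫ y, F y ∂ν := by
    intro ρ hρ F hF
    rw [← hρ, integral_map measurable_snd.aemeasurable hF.aestronglyMeasurable]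
  have E1 : ∫ p, a p * Lu p.1 ∂K = ∫ x, Lu x ∂μ := by
    have h2 : ∫ p, Lu p.1 ∂π = ∫ p, a p * Lu p.1 ∂K := by
      rw [hπg, integral_withDensity_toReal K hgEm hgEtop]
    rw [← h2, hmapπ π hπfeas.1 Lu hLum]
  have E2 : ∫ p, a p * Lv p.2 ∂K = ∫ y, Lv y ∂ν := by
    have h2 : ∫ p, Lv p.2 ∂π = ∫ p, a p * Lv p.2 ∂K := by
      rw [hπg, integral_withDensity_toReal K hgEm hgEtop]
    rw [← h2, hmapπ' π hπfeas.2 Lv hLvm]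
  have E3 : ∫ p, b p * Lu p.1 ∂K = ∫ x, Lu x ∂μ := by
    have h2 : ∫ p, Lu p.1 ∂πopt = ∫ p, b p * Lu p.1 ∂K := by
      rw [hπoptdef, integral_withDensity_toReal K hfEm hfEtop]
      apply integral_congr_ae
      filter_upwards [hfEtoReal] with p hp
      rw [hp]
    rw [← h2, hmapπ πopt hπopt.1 Lu hLum]
  have E4 : ∫ p, b p * Lv p.2 ∂K = ∫ y, Lv y ∂ν := by
    have h2 : ∫ p, Lv p.2 ∂πopt = ∫ p, b p * Lv p.2 ∂K := by
      rw [hπoptdef, integral_withDensity_toReal K hfEm hfEtop]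
      apply integral_congr_ae
      filter_upwards [hfEtoReal] with p hp
      rw [hp]
    rw [← h2, hmapπ' πopt hπopt.2 Lv hLvm]
  have hsum_a : Integrable (fun p => a p * Lu p.1 + a p * Lv p.2) K := haLu_int.add haLv_int
  have hsum_b : Integrable (fun p => b p * Lu p.1 + b p * Lv p.2) K := hbLu_int.add hbLv_int
  have hcross_int : Integrable (fun p => (a p - b p) * (Lu p.1 + Lv p.2)) K := by
    have h1 : Integrable
        (fun p => (a p * Lu p.1 + a p * Lv p.2) - (b p * Lu p.1 + b p * Lv p.2)) K :=
      hsum_a.sub hsum_b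
    apply h1.congr
    apply Eventually.of_forall
    intro p
    ring
  have hcancel : ∫ p, (a p - b p) * (Lu p.1 + Lv p.2) ∂K = 0 := by
    have h0 : (fun p => (a p - b p) * (Lu p.1 + Lv p.2)) =
        fun p => (a p * Lu p.1 + a p * Lv p.2) - (b p * Lu p.1 + b p * Lv p.2) := by
      funext p; ring
    rw [h0, integral_sub hsum_a hsum_b,
      integral_add haLu_int haLv_int, integral_add hbLu_int hbLv_int, E1, E2, E3, E4]
    ring
  -- the pointwise identity
  set r : X × Y → ℝ := fun p => a p / b p with hrdef
  have hrm : Measurable r := ham.div hbm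
  have hident : (fun p => b p * phi (r p)) =ᵐ[K]
      fun p => phi (a p) - phi (b p) - (a p - b p) * (Lu p.1 + Lv p.2) := by
    filter_upwards [huspK, hvspK] with p h1 h2
    have hb : 0 < b p := mul_pos h1 h2
    have hlogb : Real.log (b p) = Lu p.1 + Lv p.2 := Real.log_mul h1.ne' h2.ne'
    have halog : a p * Real.log (a p / b p) = a p * Real.log (a p) - a p * Real.log (b p) := by
      rcases eq_or_lt_of_le (ha0 p) with h | h
      · simp [← h]
      · rw [Real.log_div h.ne' hb.ne']; ring
    have h3 : b p * phi (r p) = a p * Real.log (a p) - a p * Real.log (b p) - a p + b p := by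
      have hba : b p * (a p / b p) = a p := by field_simp
      simp only [hrdef, phi]
      calc b p * ((a p / b p) * Real.log (a p / b p) - a p / b p + 1)
          = (b p * (a p / b p)) * Real.log (a p / b p) - b p * (a p / b p) + b p := by ring
        _ = a p * Real.log (a p / b p) - a p + b p := by rw [hba]
        _ = _ := by rw [halog]
    rw [h3, ← hlogb]
    simp only [phi]
    ring
  have hdiff_int : Integrable (fun p => phi (a p) - phi (b p)) K := hphia_int.sub hphib_int
  have hbphir_int : Integrable (fun p => b p * phi (r p)) K := by
    apply Integrable.congr (hdiff_int.sub hcross_int)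
    exact hident.symm
  have hbphir_nonneg : 0 ≤ᵐ[K] fun p => b p * phi (r p) := by
    filter_upwards [hbposK] with p hp
    exact mul_nonneg hp.le (phi_nonneg (div_nonneg (ha0 p) hp.le))
  have hphib_nonneg : 0 ≤ᵐ[K] fun p => phi (b p) := by
    filter_upwards [hbposK] with p hp
    exact phi_nonneg hp.le
  have main_real : ∫ p, phi (a p) ∂K = ∫ p, b p * phi (r p) ∂K + ∫ p, phi (b p) ∂K := by
    have h1 : ∫ p, b p * phi (r p) ∂K =
        ∫ p, (phi (a p) - phi (b p) - (a p - b p) * (Lu p.1 + Lv p.2)) ∂K :=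
      integral_congr_ae hident
    rw [h1, integral_sub hdiff_int hcross_int,
      integral_sub hphia_int hphib_int, hcancel]
    ring
  -- absolute continuity facts
  have hπ_ac_K : π ≪ K := hπg ▸ withDensity_absolutelyContinuous K gE
  have hπopt_ac_K : πopt ≪ K := hπoptdef ▸ withDensity_absolutelyContinuous K fE
  have hfEpos : ∀ᵐ p ∂K, fE p ≠ 0 := by
    filter_upwards [hbposK] with p hp
    rw [hofb p]
    simp [ENNReal.ofReal_eq_zero, not_le, hp]
  have hK_ac_opt : K ≪ πopt := by
    rw [hπoptdef]
    exact withDensity_absolutelyContinuous' hfEm.aemeasurable hfEpos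
  have hπ_ac_opt : π ≪ πopt := hπ_ac_K.trans hK_ac_opt
  -- KL(π|K)
  have KL1 : KL π K = ENNReal.ofReal (∫ p, phi (a p) ∂K) := by
    rw [KL, if_pos hπ_ac_K]
    have hrn : π.rnDeriv K =ᵐ[K] gE := hπg ▸ Measure.rnDeriv_withDensity K hgEm
    have h1 : (fun p => ENNReal.ofReal (phi ((π.rnDeriv K p)).toReal)) =ᵐ[K]
        fun p => ENNReal.ofReal (phi (a p)) := by
      filter_upwards [hrn] with p hp
      rw [hp]
    rw [lintegral_congr_ae h1,
      ← ofReal_integral_eq_lintegral_ofReal hphia_int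
        (Eventually.of_forall fun p => phi_nonneg (ha0 p))]
  -- KL(πopt|K)
  have KL2 : KL πopt K = ENNReal.ofReal (∫ p, phi (b p) ∂K) := by
    rw [KL, if_pos hπopt_ac_K]
    have hrn : πopt.rnDeriv K =ᵐ[K] fE := hπoptdef ▸ Measure.rnDeriv_withDensity K hfEm
    have h1 : (fun p => ENNReal.ofReal (phi ((πopt.rnDeriv K p)).toReal)) =ᵐ[K]
        fun p => ENNReal.ofReal (phi (b p)) := by
      filter_upwards [hrn, hfEtoReal] with p hp hp2
      rw [hp, hp2]
    rw [lintegral_congr_ae h1,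
      ← ofReal_integral_eq_lintegral_ofReal hphib_int hphib_nonneg]
  -- KL(π|πopt)
  have KL3 : KL π πopt = ENNReal.ofReal (∫ p, b p * phi (r p) ∂K) := by
    rw [KL, if_pos hπ_ac_opt]
    set hE : X × Y → ℝ≥0∞ := fun p => gE p * (fE p)⁻¹ with hhEdef
    have hhEm : Measurable hE := hgEm.mul hfEm.inv
    have hπ_wd : π = πopt.withDensity hE := by
      rw [hπoptdef, ← withDensity_mul K hfEm hhEm, hπg]
      apply withDensity_congr_ae
      filter_upwards [hfEpos] with p hp
      show gE p = fE p * hE p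
      rw [hhEdef]
      simp only []
      rw [mul_comm (gE p), ← mul_assoc, ENNReal.mul_inv_cancel hp (hfEtop p), one_mul]
    have hrn : π.rnDeriv πopt =ᵐ[πopt] hE := hπ_wd ▸ Measure.rnDeriv_withDensity πopt hhEm
    have h1 : (fun p => ENNReal.ofReal (phi ((π.rnDeriv πopt p)).toReal)) =ᵐ[πopt]
        fun p => ENNReal.ofReal (phi ((hE p).toReal)) := by
      filter_upwards [hrn] with p hp
      rw [hp]
    have hFm : Measurable (fun p => ENNReal.ofReal (phi ((hE p).toReal))) :=
      ENNReal.measurable_ofReal.comp (hphim.comp hhEm.ennreal_toReal)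
    have h2 : (fun p => (fE * fun q => ENNReal.ofReal (phi ((hE q).toReal))) p) =ᵐ[K]
        fun p => ENNReal.ofReal (b p * phi (r p)) := by
      filter_upwards [hbposK] with p hp
      have htr : (hE p).toReal = r p := by
        rw [hhEdef]
        simp only []
        rw [ENNReal.toReal_mul, ENNReal.toReal_inv, hofb p,
          ENNReal.toReal_ofReal hp.le, hrdef]
        simp [hadef, div_eq_mul_inv]
      show fE p * ENNReal.ofReal (phi ((hE p).toReal)) = ENNReal.ofReal (b p * phi (r p))
      rw [htr, hofb p, ← ENNReal.ofReal_mul hp.le]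
    calc ∫⁻ p, ENNReal.ofReal (phi ((π.rnDeriv πopt p)).toReal) ∂πopt
        = ∫⁻ p, ENNReal.ofReal (phi ((hE p).toReal)) ∂πopt := lintegral_congr_ae h1
      _ = ∫⁻ p, ENNReal.ofReal (phi ((hE p).toReal)) ∂(K.withDensity fE) := by rw [← hπoptdef]
      _ = ∫⁻ p, (fE * fun q => ENNReal.ofReal (phi ((hE q).toReal))) p ∂K :=
          lintegral_withDensity_eq_lintegral_mul K hfEm hFm
      _ = ∫⁻ p, ENNReal.ofReal (b p * phi (r p)) ∂K := lintegral_congr_ae h2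
      _ = ENNReal.ofReal (∫ p, b p * phi (r p) ∂K) :=
          (ofReal_integral_eq_lintegral_ofReal hbphir_int hbphir_nonneg).symm
  rw [KL1, KL2, KL3, main_real,
    ENNReal.ofReal_add (integral_nonneg_of_ae hbphir_nonneg)
      (integral_nonneg_of_ae hphib_nonneg)]
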